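/- Let S(k,ℓ) denote the Stirling numbers of the second kind. For all natural numbers k and ℓ with ℓ ≤ k, one has ℓ · S(k,ℓ) = ∑_{j=ℓ}^{k} C(k, j-1) · (-1)^{k-j} · S(j,ℓ), where C(n,r) is the binomial coefficient. -/
import Mathlib


/-- Stirling numbers of the second kind. -/
def stirling2 : ℕ → ℕ → ℕ
  | 0, 0 => 1
  | 0, _ + 1 => 0
  | _ + 1, 0 => 0
  | k + 1, l + 1 => (l + 1) * stirling2 k (l + 1) + stirling2 k l

lemma stirling2_eq_zero_of_lt : ∀ n l : ℕ, n < l → stirling2 n l = 0 := by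
  intro n
  induction n with
  | zero => intro l h; cases l with
    | zero => omega
    | succ m => simp [stirling2]
  | succ k ih =>
    intro l h
    cases l with
    | zero => omega
    | succ m =>
      have h1 : stirling2 k (m+1) = 0 := ih _ (by omega)
      have h2 : stirling2 k m = 0 := ih _ (by omega)
      simp [stirling2, h1, h2]

lemma neg_one_pow_sub (a b : ℕ) (h : b ≤ a) : ((-1:ℤ))^(a-b) = (-1)^a * (-1)^b := by
  have : a - b + b = a := Nat.sub_add_cancel h
  calc ((-1:ℤ))^(a-b) = (-1)^(a-b) * ((-1)^b * (-1)^b) := by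
        rw [← pow_add]; simp [← two_mul]
    _ = (-1)^a * (-1)^b := by rw [← mul_assoc, ← pow_add, this]

lemma key (k : ℕ) : ∀ l : ℕ, ∑ i ∈ Finset.range (k+1),
    (-1:ℤ)^i * (k.choose i) * stirling2 (i+1) (l+1) = (-1)^k * stirling2 k l := by
  induction k with
  | zero => intro l; cases l <;> simp [stirling2]
  | succ k ih =>
    intro l
    rw [Finset.sum_range_succ']
    have pascal : ∀ i, ((k+1).choose (i+1) : ℤ) = k.choose i + k.choose (i+1) := by
      intro i; rw [Nat.choose_succ_succ]; push_cast; ring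
    have split : ∑ i ∈ Finset.range (k+1),
        (-1:ℤ)^(i+1) * ((k+1).choose (i+1)) * stirling2 (i+1+1) (l+1)
      = (∑ i ∈ Finset.range (k+1), (-1:ℤ)^(i+1) * (k.choose i) * stirling2 (i+2) (l+1))
      + (∑ i ∈ Finset.range (k+1), (-1:ℤ)^(i+1) * (k.choose (i+1)) * stirling2 (i+2) (l+1)) := by
      rw [← Finset.sum_add_distrib]
      apply Finset.sum_congr rfl
      intro i _
      rw [pascal]; ring
    have hB : (∑ i ∈ Finset.range (k+1), (-1:ℤ)^(i+1) * (k.choose (i+1)) * stirling2 (i+2) (l+1))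
        + (-1:ℤ)^0 * (k.choose 0) * stirling2 1 (l+1)
        = (-1)^k * stirling2 k l := by
      rw [← ih l, Finset.sum_range_succ, Finset.sum_range_succ']
      simp [Nat.choose_succ_self]
    have hA : (∑ i ∈ Finset.range (k+1), (-1:ℤ)^(i+1) * (k.choose i) * stirling2 (i+2) (l+1))
        = -((l+1) * ((-1)^k * stirling2 k l))
          - (∑ i ∈ Finset.range (k+1), (-1:ℤ)^i * (k.choose i) * stirling2 (i+1) l) := by
      rw [← ih l, Finset.mul_sum, ← Finset.sum_neg_distrib, ← Finset.sum_sub_distrib]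
      apply Finset.sum_congr rfl
      intro i _
      have : (stirling2 (i+2) (l+1) : ℤ) = (l+1) * stirling2 (i+1) (l+1) + stirling2 (i+1) l := by
        show (stirling2 (i+1+1) (l+1) : ℤ) = _
        rw [stirling2]; push_cast; ring
      rw [this]; ring
    have hpeel : ((-1:ℤ))^0 * (((k+1).choose 0 : ℕ) : ℤ) * stirling2 (0+1) (l+1)
        = (-1:ℤ)^0 * ((k.choose 0 : ℕ) : ℤ) * stirling2 1 (l+1) := by simp
    rw [split, hpeel, add_assoc, hB, hA]
    cases l with
    | zero =>
      have hG : (∑ i ∈ Finset.range (k+1), (-1:ℤ)^i * (k.choose i) * stirling2 (i+1) 0) = 0 := by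
        apply Finset.sum_eq_zero; intro i _; simp [stirling2]
      rw [hG]
      have h0 : stirling2 (k+1) 0 = 0 := by simp [stirling2]
      rw [h0]; push_cast; ring
    | succ m =>
      rw [ih m]
      have hs : (stirling2 (k+1) (m+1) : ℤ) = (m+1) * stirling2 k (m+1) + stirling2 k m := by
        rw [stirling2]; push_cast; ring
      rw [hs]; push_cast; ring

theorem stirling_sum_identity (k l : ℕ) (hlk : l ≤ k) :
    (l : ℤ) * stirling2 k l =
      ∑ j ∈ Finset.Icc l k,
        (if j = 0 then 0 else (k.choose (j - 1) : ℤ)) * (-1) ^ (k - j) * stirling2 j l := by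
  cases l with
  | zero =>
    simp only [Nat.cast_zero, zero_mul]
    symm
    apply Finset.sum_eq_zero
    intro j hj
    cases j with
    | zero => simp
    | succ n => simp [stirling2]
  | succ m =>
    have hsub : Finset.Icc (m+1) k ⊆ Finset.range (k+1) := by
      intro j hj; simp only [Finset.mem_Icc] at hj; simp only [Finset.mem_range]; omega
    have hz : ∀ j ∈ Finset.range (k+1), j ∉ Finset.Icc (m+1) k →
        (if j = 0 then 0 else (k.choose (j-1):ℤ)) * (-1)^(k-j) * stirling2 j (m+1) = 0 := by
      intro j hj hj'
      simp only [Finset.mem_range] at hj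
      simp only [Finset.mem_Icc, not_and, not_le] at hj'
      have hjm : j < m + 1 := by omega
      cases j with
      | zero => simp
      | succ n =>
        have h0 := stirling2_eq_zero_of_lt (n+1) (m+1) hjm
        simp [h0]
    rw [Finset.sum_subset hsub hz, Finset.sum_range_succ']
    have hterm : ∀ i ∈ Finset.range k,
        (if i+1 = 0 then (0:ℤ) else (k.choose (i+1-1):ℤ)) * (-1)^(k-(i+1)) * stirling2 (i+1) (m+1)
        = -(-1:ℤ)^k * ((-1)^i * (k.choose i) * stirling2 (i+1) (m+1)) := by
      intro i hi
      simp only [Finset.mem_range] at hi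
      rw [if_neg (by omega), Nat.add_sub_cancel, neg_one_pow_sub k (i+1) (by omega), pow_succ]
      ring
    rw [Finset.sum_congr rfl hterm, ← Finset.mul_sum]
    have hkey := key k m
    rw [Finset.sum_range_succ] at hkey
    have hr : ∑ i ∈ Finset.range k, (-1:ℤ)^i * (k.choose i) * stirling2 (i+1) (m+1)
        = (-1)^k * stirling2 k m - (-1)^k * (k.choose k) * stirling2 (k+1) (m+1) :=
      eq_sub_of_add_eq hkey
    rw [hr, Nat.choose_self]
    have hu : (-1:ℤ)^k * (-1)^k = 1 := by
      rw [← pow_add, ← two_mul, pow_mul]; norm_num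
    have hs : (stirling2 (k+1) (m+1) : ℤ) = (m+1)*stirling2 k (m+1) + stirling2 k m := by
      rw [stirling2]; push_cast; ring
    rw [hs]
    push_cast
    linear_combination (-((m:ℤ)+1) * stirling2 k (m+1)) * hu
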